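/- Let n ≥ 1 be odd. Then the convex hull of G_{[−1,1]^n} equals the polytope { (x,w) ∈ [−1,1]^n × [−1,1] : for every subset I ⊆ {1,…,n} of even cardinality, −(n−1) ≤ Σ_{i∈I} x_i − Σ_{i∉I} x_i + w ≤ n−1 }. -/

import Mathlib

open Finset

lemma lemA {ι : Type*} (s : Finset ι) (y : ι → ℝ)
    (hy : ∀ i ∈ s, |y i| ≤ 1) :
    ∑ i ∈ s, y i - ∏ i ∈ s, y i ≤ (s.card : ℝ) - 1 := by
  induction s using Finset.cons_induction with
  | empty => simp
  | cons a s ha ih =>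
    have hP : |∏ i ∈ s, y i| ≤ 1 := by
      rw [Finset.abs_prod]
      exact Finset.prod_le_one (fun i _ => abs_nonneg _)
        (fun i hi => hy i (Finset.mem_cons_of_mem hi))
    have hP' := abs_le.1 hP
    have hya := abs_le.1 (hy a (Finset.mem_cons_self a s))
    have ihs := ih (fun i hi => hy i (Finset.mem_cons_of_mem hi))
    rw [Finset.sum_cons, Finset.prod_cons, Finset.card_cons]
    push_cast
    nlinarith [mul_le_mul_of_nonneg_right hya.2 (by linarith : (0:ℝ) ≤ 1 - ∏ i ∈ s, y i)]

lemma lemB {ι : Type*} (s : Finset ι) (a y : ι → ℝ)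
    (ha : ∀ i ∈ s, 0 ≤ a i) (hy : ∀ i ∈ s, y i ≤ 1)
    {k : ι} (hk : k ∈ s) (hmin : ∀ i ∈ s, a k ≤ a i)
    (hsum : ∑ i ∈ s, y i ≤ (s.card : ℝ) - 2) :
    ∑ i ∈ s, a i * y i ≤ ∑ i ∈ s, a i - 2 * a k := by
  have h1 : ∑ i ∈ s, a i * y i ≤ ∑ i ∈ s, (a k * y i + (a i - a k)) := by
    refine Finset.sum_le_sum fun i hi => ?_
    nlinarith [hmin i hi, hy i hi]
  have h2 : ∑ i ∈ s, (a k * y i + (a i - a k)) =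
      a k * ∑ i ∈ s, y i + (∑ i ∈ s, a i - s.card * a k) := by
    rw [Finset.sum_add_distrib, Finset.mul_sum, Finset.sum_sub_distrib]
    simp [Finset.sum_const, nsmul_eq_mul]
  have h3 : a k * ∑ i ∈ s, y i ≤ a k * ((s.card : ℝ) - 2) :=
    mul_le_mul_of_nonneg_left hsum (ha k hk)
  calc ∑ i ∈ s, a i * y i ≤ a k * ∑ i ∈ s, y i + (∑ i ∈ s, a i - s.card * a k) := by
        rw [← h2]; exact h1
    _ ≤ a k * ((s.card : ℝ) - 2) + (∑ i ∈ s, a i - s.card * a k) := by linarith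
    _ = ∑ i ∈ s, a i - 2 * a k := by ring

lemma lemSplit {n : ℕ} (x : Fin n → ℝ) (I : Finset (Fin n)) :
    ∑ i, (if i ∈ I then (1:ℝ) else -1) * x i
      = (∑ i ∈ I, x i) - ∑ i ∈ Iᶜ, x i := by
  have h1 : ∑ i ∈ I, (if i ∈ I then (1:ℝ) else -1) * x i = ∑ i ∈ I, x i :=
    Finset.sum_congr rfl (fun i hi => by rw [if_pos hi, one_mul])
  have h2 : ∑ i ∈ Iᶜ, (if i ∈ I then (1:ℝ) else -1) * x i = -∑ i ∈ Iᶜ, x i := by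
    rw [← Finset.sum_neg_distrib]
    exact Finset.sum_congr rfl (fun i hi => by
      rw [if_neg (Finset.mem_compl.1 hi), neg_one_mul])
  rw [← Finset.sum_add_sum_compl I (fun i => (if i ∈ I then (1:ℝ) else -1) * x i), h1, h2]
  ring

lemma lemProdSign {n : ℕ} (I : Finset (Fin n)) :
    ∏ i, (if i ∈ I then (1:ℝ) else -1) = (-1) ^ Iᶜ.card := by
  rw [← Finset.prod_mul_prod_compl I]
  rw [Finset.prod_congr rfl (fun i hi => if_pos hi),
    Finset.prod_congr rfl (g := fun _ => (-1:ℝ))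
      (fun i hi => if_neg (Finset.mem_compl.1 hi))]
  simp

lemma lemC {n : ℕ} (x ε : Fin n → ℝ) (hx : ∀ i, |x i| ≤ 1)
    (hε : ∀ i, ε i = 1 ∨ ε i = -1) :
    ∑ i, ε i * x i - (∏ i, ε i) * ∏ i, x i ≤ (n : ℝ) - 1 := by
  have := lemA Finset.univ (fun i => ε i * x i) (fun i _ => by
    rw [abs_mul]
    rcases hε i with h | h <;> simp [h, hx i])
  rw [Finset.prod_mul_distrib] at this
  simpa using this

lemma lemRepr {n : ℕ} (f : ((Fin n → ℝ) × ℝ) →L[ℝ] ℝ) (q : (Fin n → ℝ) × ℝ) :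
    f q = ∑ i, f (Pi.single i 1, 0) * q.1 i + f (0, 1) * q.2 := by
  have h1 : q = (∑ i, q.1 i • ((Pi.single i (1:ℝ) : Fin n → ℝ), (0:ℝ)))
      + q.2 • ((0 : Fin n → ℝ), (1:ℝ)) := by
    apply Prod.ext
    · simp only [Prod.fst_add, Prod.smul_fst, Prod.fst_sum, smul_zero, add_zero]
      have : ∀ i : Fin n, q.1 i • (Pi.single i (1:ℝ) : Fin n → ℝ) = Pi.single i (q.1 i) :=
        fun i => by simp [← Pi.single_smul, smul_eq_mul]
      rw [Finset.sum_congr rfl (fun i _ => this i), Finset.univ_sum_single]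
    · simp [Prod.snd_sum]
  conv_lhs => rw [h1]
  rw [map_add, map_sum, map_smul]
  simp only [map_smul, smul_eq_mul]
  rw [Finset.sum_congr rfl (fun i _ => mul_comm (q.1 i) (f (Pi.single i 1, (0:ℝ))))]
  ring

/-- Convex hull of the graph of the multilinear monomial over `[-1,1]^n`, `n` odd. -/
theorem stmt7 (n : ℕ) (hn : 1 ≤ n) (hodd : Odd n) :
    convexHull ℝ {p : (Fin n → ℝ) × ℝ |
        p.1 ∈ Set.Icc (-1 : Fin n → ℝ) 1 ∧ p.2 = ∏ j, p.1 j}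
      = {p : (Fin n → ℝ) × ℝ | p.1 ∈ Set.Icc (-1 : Fin n → ℝ) 1 ∧
          p.2 ∈ Set.Icc (-1 : ℝ) 1 ∧
          ∀ I : Finset (Fin n), Even I.card →
            -((n : ℝ) - 1) ≤ (∑ i ∈ I, p.1 i) - (∑ i ∈ Iᶜ, p.1 i) + p.2 ∧
            (∑ i ∈ I, p.1 i) - (∑ i ∈ Iᶜ, p.1 i) + p.2 ≤ (n : ℝ) - 1} := by
  apply Set.Subset.antisymm
  · -- easy direction
    apply convexHull_min
    · rintro ⟨x, w⟩ ⟨hx, hw⟩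
      replace hw : w = ∏ j, x j := hw
      have hxa : ∀ i, |x i| ≤ 1 := fun i => abs_le.2 ⟨by simpa using hx.1 i, by simpa using hx.2 i⟩
      have hcompl : ∀ I : Finset (Fin n), Even I.card → Odd Iᶜ.card := by
        intro I hI
        rw [Finset.card_compl, Fintype.card_fin]
        exact Nat.Odd.sub_even (I.card_le_univ.trans_eq (by simp)) hodd hI
      refine ⟨hx, ?_, ?_⟩
      · show w ∈ Set.Icc (-1:ℝ) 1
        rw [Set.mem_Icc, ← abs_le, hw, Finset.abs_prod]
        exact Finset.prod_le_one (fun i _ => abs_nonneg _) (fun i _ => hxa i)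
      · intro I hI
        constructor
        · -- lower bound : use signs -1 on I, +1 on Iᶜ
          have h := lemC x (fun i => if i ∈ Iᶜ then (1:ℝ) else -1) hxa
            (fun i => by by_cases h : i ∈ Iᶜ <;> simp [h])
          rw [lemSplit, lemProdSign, compl_compl] at h
          rw [Even.neg_one_pow hI] at h
          show -((n:ℝ) - 1) ≤ (∑ i ∈ I, x i) - (∑ i ∈ Iᶜ, x i) + w
          rw [hw]
          linarith
        · -- upper bound : use signs +1 on I, -1 on Iᶜ
          have h := lemC x (fun i => if i ∈ I then (1:ℝ) else -1) hxa
            (fun i => by by_cases h : i ∈ I <;> simp [h])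
          rw [lemSplit, lemProdSign] at h
          rw [Odd.neg_one_pow (hcompl I hI)] at h
          show (∑ i ∈ I, x i) - (∑ i ∈ Iᶜ, x i) + w ≤ (n:ℝ) - 1
          rw [hw]
          linarith
    · -- convexity
      rintro p hp q hq a b ha hb hab
      simp only [Set.mem_setOf_eq, Set.mem_Icc] at hp hq ⊢
      have hco : ∀ i, (a • p + b • q).1 i = a * p.1 i + b * q.1 i := fun i => rfl
      refine ⟨⟨fun i => ?_, fun i => ?_⟩, ⟨?_, ?_⟩, ?_⟩
      · have h1 := hp.1.1 i; have h2 := hq.1.1 i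
        simp only [Pi.neg_apply, Pi.one_apply] at h1 h2 ⊢
        rw [hco i]; nlinarith
      · have h1 := hp.1.2 i; have h2 := hq.1.2 i
        simp only [Pi.one_apply] at h1 h2 ⊢
        rw [hco i]; nlinarith
      · have h1 := hp.2.1.1; have h2 := hq.2.1.1
        show -1 ≤ a * p.2 + b * q.2
        nlinarith
      · have h1 := hp.2.1.2; have h2 := hq.2.1.2
        show a * p.2 + b * q.2 ≤ 1
        nlinarith
      · intro I hI
        have e1 : ∑ i ∈ I, (a • p + b • q).1 i = a * ∑ i ∈ I, p.1 i + b * ∑ i ∈ I, q.1 i := by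
          rw [Finset.sum_congr rfl (fun i _ => hco i), Finset.sum_add_distrib,
            Finset.mul_sum, Finset.mul_sum]
        have e2 : ∑ i ∈ Iᶜ, (a • p + b • q).1 i = a * ∑ i ∈ Iᶜ, p.1 i + b * ∑ i ∈ Iᶜ, q.1 i := by
          rw [Finset.sum_congr rfl (fun i _ => hco i), Finset.sum_add_distrib,
            Finset.mul_sum, Finset.mul_sum]
        have e3 : (a • p + b • q).2 = a * p.2 + b * q.2 := rfl
        obtain ⟨hpl, hpu⟩ := hp.2.2 I hI
        obtain ⟨hql, hqu⟩ := hq.2.2 I hI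
        have k1 := mul_le_mul_of_nonneg_left hpu ha
        have k2 := mul_le_mul_of_nonneg_left hqu hb
        have k3 := mul_le_mul_of_nonneg_left hpl ha
        have k4 := mul_le_mul_of_nonneg_left hql hb
        rw [e1, e2, e3]
        constructor <;> nlinarith
  · -- hard direction
    intro p hp
    simp only [Set.mem_setOf_eq] at hp
    set F : (Fin n → Bool) → (Fin n → ℝ) × ℝ :=
      fun b => (fun i => if b i then (1:ℝ) else -1, ∏ i, if b i then (1:ℝ) else -1) with hF
    have hVS : Set.range F ⊆ {p : (Fin n → ℝ) × ℝ |
        p.1 ∈ Set.Icc (-1 : Fin n → ℝ) 1 ∧ p.2 = ∏ j, p.1 j} := by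
      rintro - ⟨b, rfl⟩
      refine ⟨⟨fun i => ?_, fun i => ?_⟩, rfl⟩
      · simp only [hF, Pi.neg_apply, Pi.one_apply]
        by_cases h : b i <;> simp [h]
      · simp only [hF, Pi.one_apply]
        by_cases h : b i <;> simp [h]
    refine convexHull_mono hVS ?_
    by_contra hcon
    obtain ⟨f, u, hfu, hup⟩ := geometric_hahn_banach_closed_point
      (convex_convexHull ℝ _) ((Set.finite_range F).isClosed_convexHull (𝕜 := ℝ)) hcon
    have hclaim : ∃ b : Fin n → Bool, f p ≤ f (F b) := by
      set c : Fin n → ℝ := fun i => f (Pi.single i 1, 0) with hc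
      set d : ℝ := f (0, 1) with hd
      have hfq : ∀ q : (Fin n → ℝ) × ℝ, f q = ∑ i, c i * q.1 i + d * q.2 := fun q => lemRepr f q
      set bs : Fin n → Bool := fun i => decide (0 ≤ c i) with hbs
      have hfF : ∀ b : Fin n → Bool, f (F b) =
          ∑ i, c i * (if b i then (1:ℝ) else -1) + d * ∏ i, (if b i then (1:ℝ) else -1) :=
        fun b => hfq (F b)
      have hcε : ∀ i, c i * (if bs i then (1:ℝ) else -1) = |c i| := by
        intro i
        by_cases h : 0 ≤ c i
        · simp [hbs, h, abs_of_nonneg h]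
        · simp [hbs, h, abs_of_neg (not_le.1 h)]
      set bw : Bool := decide (0 ≤ d) with hbw
      have hdε : d * (if bw then (1:ℝ) else -1) = |d| := by
        by_cases h : 0 ≤ d
        · simp [hbw, h, abs_of_nonneg h]
        · simp [hbw, h, abs_of_neg (not_le.1 h)]
      set I : Finset (Fin n) := Finset.univ.filter (fun i => bs i = true) with hI
      have hmemI : ∀ i, i ∈ I ↔ bs i = true := by intro i; simp [hI]
      have hεI : ∀ i, (if bs i then (1:ℝ) else -1) = (if i ∈ I then (1:ℝ) else -1) := by
        intro i; by_cases h : bs i <;> simp [hmemI, h]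
      have hprodsign : ∏ i, (if bs i then (1:ℝ) else -1) = (-1:ℝ) ^ Iᶜ.card := by
        rw [Finset.prod_congr rfl (fun i _ => hεI i)]; exact lemProdSign I
      have hxa : ∀ i, |p.1 i| ≤ 1 :=
        fun i => abs_le.2 ⟨by simpa using hp.1.1 i, by simpa using hp.1.2 i⟩
      have hwa : |p.2| ≤ 1 := abs_le.2 ⟨hp.2.1.1, hp.2.1.2⟩
      by_cases hm : (∏ i, (if bs i then (1:ℝ) else -1)) = (if bw then (1:ℝ) else -1)
      · refine ⟨bs, ?_⟩
        rw [hfq p, hfF bs, hm, hdε]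
        refine add_le_add (Finset.sum_le_sum fun i _ => ?_) ?_
        · rw [hcε i]
          calc c i * p.1 i ≤ |c i * p.1 i| := le_abs_self _
            _ = |c i| * |p.1 i| := abs_mul _ _
            _ ≤ |c i| * 1 := mul_le_mul_of_nonneg_left (hxa i) (abs_nonneg _)
            _ = |c i| := mul_one _
        · calc d * p.2 ≤ |d * p.2| := le_abs_self _
            _ = |d| * |p.2| := abs_mul _ _
            _ ≤ |d| * 1 := mul_le_mul_of_nonneg_left hwa (abs_nonneg _)
            _ = |d| := mul_one _
      · -- mismatch case
        have hpm : ∏ i, (if bs i then (1:ℝ) else -1) = -(if bw then (1:ℝ) else -1) := by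
          rcases Nat.even_or_odd Iᶜ.card with h | h <;> by_cases hb : bw <;>
            simp [hprodsign, h.neg_one_pow, hb] at hm ⊢
        have hkey : ∑ i, (if bs i then (1:ℝ) else -1) * p.1 i
            + (if bw then (1:ℝ) else -1) * p.2 ≤ (n:ℝ) - 1 := by
          have hsplit : ∑ i, (if bs i then (1:ℝ) else -1) * p.1 i
              = (∑ i ∈ I, p.1 i) - ∑ i ∈ Iᶜ, p.1 i := by
            rw [Finset.sum_congr rfl (fun i _ => by rw [hεI i])]; exact lemSplit p.1 I
          by_cases hb : bw
          · have hoddc : Odd Iᶜ.card := by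
              rcases Nat.even_or_odd Iᶜ.card with h | h
              · exfalso; apply hm; rw [hprodsign, Even.neg_one_pow h]; simp [hb]
              · exact h
            have hev : Even I.card := by
              have h1 : I.card + Iᶜ.card = n := by
                rw [Finset.card_add_card_compl]; simp
              rcases hodd with ⟨m, hmn⟩; rcases hoddc with ⟨l, hl⟩
              exact ⟨m - l, by omega⟩
            have := (hp.2.2 I hev).2
            rw [hsplit]; simp only [hb, if_true, one_mul]; linarith
          · have hevc : Even Iᶜ.card := by
              rcases Nat.even_or_odd Iᶜ.card with h | h
              · exact h
              · exfalso; apply hm; rw [hprodsign, Odd.neg_one_pow h]; simp [hb]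
            have := (hp.2.2 Iᶜ hevc).1
            rw [compl_compl] at this
            simp only [Bool.not_eq_true] at hb
            rw [hsplit, hb]
            norm_num
            linarith
        set A : Option (Fin n) → ℝ := fun o => o.elim |d| (fun i => |c i|) with hA
        set Y : Option (Fin n) → ℝ := fun o =>
          o.elim ((if bw then (1:ℝ) else -1) * p.2)
            (fun i => (if bs i then (1:ℝ) else -1) * p.1 i) with hY
        obtain ⟨k, -, hkmin⟩ := Finset.exists_min_image
          (Finset.univ : Finset (Option (Fin n))) A ⟨none, Finset.mem_univ _⟩
        have hYle : ∀ o ∈ (Finset.univ : Finset (Option (Fin n))), Y o ≤ 1 := by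
          rintro (_ | i) -
          · simp only [hY, Option.elim]
            have h1 : |(if bw then (1:ℝ) else -1)| = 1 := by by_cases h : bw <;> simp [h]
            calc _ ≤ |(if bw then (1:ℝ) else -1) * p.2| := le_abs_self _
              _ ≤ 1 := by rw [abs_mul, h1, one_mul]; exact hwa
          · simp only [hY, Option.elim]
            have h1 : |(if bs i then (1:ℝ) else -1)| = 1 := by by_cases h : bs i <;> simp [h]
            calc _ ≤ |(if bs i then (1:ℝ) else -1) * p.1 i| := le_abs_self _
              _ ≤ 1 := by rw [abs_mul, h1, one_mul]; exact hxa i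
        have hAnn : ∀ o ∈ (Finset.univ : Finset (Option (Fin n))), 0 ≤ A o := by
          rintro (_ | i) - <;> simp [hA]
        have hcard : (((Finset.univ : Finset (Option (Fin n))).card : ℝ)) = n + 1 := by simp
        have hsumY : ∑ o, Y o ≤ (((Finset.univ : Finset (Option (Fin n))).card : ℝ)) - 2 := by
          rw [Fintype.sum_option, hcard]
          simp only [hY, Option.elim]
          linarith [hkey]
        have hB := lemB Finset.univ A Y hAnn hYle (Finset.mem_univ k)
          (fun i _ => hkmin i (Finset.mem_univ _)) hsumY
        have hfp : f p = ∑ o, A o * Y o := by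
          rw [hfq p, Fintype.sum_option]
          simp only [hA, hY, Option.elim]
          have e1 : |d| * ((if bw then (1:ℝ) else -1) * p.2) = d * p.2 := by
            by_cases h : 0 ≤ d
            · simp [hbw, h, abs_of_nonneg h]
            · simp [hbw, h, abs_of_neg (not_le.1 h)]
          have e2 : ∀ i, |c i| * ((if bs i then (1:ℝ) else -1) * p.1 i) = c i * p.1 i := by
            intro i
            by_cases h : 0 ≤ c i
            · simp [hbs, h, abs_of_nonneg h]
            · simp [hbs, h, abs_of_neg (not_le.1 h)]
          rw [e1, Finset.sum_congr rfl (fun i _ => e2 i)]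
          ring
        have hsumA : ∑ o, A o = |d| + ∑ i, |c i| := by
          rw [Fintype.sum_option]
          rfl
        cases k with
        | none =>
          refine ⟨bs, ?_⟩
          rw [hfF bs, Finset.sum_congr rfl (fun i _ => hcε i), hpm, mul_neg, hdε]
          have hAnone : A none = |d| := rfl
          rw [hfp]
          linarith [hB, hsumA]
        | some k0 =>
          set b' : Fin n → Bool := Function.update bs k0 (!bs k0) with hb'
          have hε' : ∀ i, (if b' i then (1:ℝ) else -1) =
              if i = k0 then -(if bs i then (1:ℝ) else -1) else (if bs i then (1:ℝ) else -1) := by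
            intro i
            by_cases h : i = k0
            · subst h
              rw [if_pos rfl, hb', Function.update_self]
              cases hbk : bs i <;> simp [hbk]
            · rw [if_neg h, hb', Function.update_of_ne h]
          have hsum' : ∑ i, c i * (if b' i then (1:ℝ) else -1)
              = (∑ i, |c i|) - 2 * |c k0| := by
            rw [← Finset.add_sum_erase _ (fun i => c i * (if b' i then (1:ℝ) else -1))
              (Finset.mem_univ k0)]
            rw [← Finset.add_sum_erase _ (fun i => |c i|) (Finset.mem_univ k0)]
            have t1 : c k0 * (if b' k0 then (1:ℝ) else -1) = -|c k0| := by
              rw [hε' k0, if_pos rfl, mul_neg, hcε k0]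
            have t2 : ∑ i ∈ Finset.univ.erase k0, c i * (if b' i then (1:ℝ) else -1)
                = ∑ i ∈ Finset.univ.erase k0, |c i| := by
              refine Finset.sum_congr rfl fun i hi => ?_
              rw [hε' i, if_neg (Finset.mem_erase.1 hi).1, hcε i]
            rw [t1, t2]; ring
          have hprod' : ∏ i, (if b' i then (1:ℝ) else -1) = (if bw then (1:ℝ) else -1) := by
            rw [← Finset.mul_prod_erase _ (fun i => if b' i then (1:ℝ) else -1)
              (Finset.mem_univ k0)]
            have t1 : (if b' k0 then (1:ℝ) else -1) = -(if bs k0 then (1:ℝ) else -1) := by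
              rw [hε' k0, if_pos rfl]
            have t2 : ∏ i ∈ Finset.univ.erase k0, (if b' i then (1:ℝ) else -1)
                = ∏ i ∈ Finset.univ.erase k0, (if bs i then (1:ℝ) else -1) := by
              refine Finset.prod_congr rfl fun i hi => ?_
              rw [hε' i, if_neg (Finset.mem_erase.1 hi).1]
            have t3 : (if bs k0 then (1:ℝ) else -1)
                * ∏ i ∈ Finset.univ.erase k0, (if bs i then (1:ℝ) else -1)
                = ∏ i, (if bs i then (1:ℝ) else -1) :=
              Finset.mul_prod_erase _ (fun i => if bs i then (1:ℝ) else -1) (Finset.mem_univ k0)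
            rw [t1, t2, neg_mul, t3, hpm, neg_neg]
          refine ⟨b', ?_⟩
          rw [hfF b', hsum', hprod', hdε]
          have hAk : A (some k0) = |c k0| := rfl
          rw [hfp]
          linarith [hB, hsumA]
    obtain ⟨b, hb⟩ := hclaim
    have := hfu (F b) (subset_convexHull ℝ _ ⟨b, rfl⟩)
    linarith
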